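/- Let C be a positive integer, X ∈ ℝ^{C×C} symmetric positive definite, v̂ ∈ ℝ^C, and L ≥ 0 with ‖X‖ L < √2 − 1. For each n ∈ {1, …, C} let φ_n : ℝ → ℝ be L-Lipschitz and nonincreasing, and define φ : ℝ^C → ℝ^C componentwise. Then the map h : ℝ^C → ℝ^C, h(v) = X φ(v) + v̂, is a contraction (there exists k < 1 with ‖h(v) − h(v′)‖ ≤ k‖v − v′‖ for all v, v′), and consequently, for every initial condition q(0) ∈ ℝ^C, the non-incremental iterates q(t+1) = φ(X q(t) + v̂) converge to the unique point q♯ satisfying q♯ = φ(X q♯ + v̂). -/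

import Mathlib

open scoped Matrix.Norms.L2Operator

/-- Stability of the non-incremental Volt/Var rule under the slope condition
`‖X‖ L < √2 - 1`: the map `h(v) = X φ(v) + v̂` is a contraction, and the
iterates `q(t+1) = φ(X q(t) + v̂)` converge, from every initial condition,
to the unique point `q♯` with `q♯ = φ(X q♯ + v̂)`. -/
theorem stmt_10 (C : ℕ) (hC : 0 < C) (L : ℝ) (hL : 0 ≤ L)
    (X : Matrix (Fin C) (Fin C) ℝ) (hX : X.PosDef)
    (hslope : ‖X‖ * L < Real.sqrt 2 - 1)
    (vhat : EuclideanSpace ℝ (Fin C))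
    (φ : Fin C → ℝ → ℝ)
    (hlip : ∀ n x y, |φ n x - φ n y| ≤ L * |x - y|)
    (hmono : ∀ n, Antitone (φ n))
    (h : EuclideanSpace ℝ (Fin C) → EuclideanSpace ℝ (Fin C))
    (hh : ∀ v n, h v n = X.mulVec (fun m => φ m (v m)) n + vhat n)
    (G : EuclideanSpace ℝ (Fin C) → EuclideanSpace ℝ (Fin C))
    (hG : ∀ q n, G q n = φ n (X.mulVec q n + vhat n)) :
    (∃ k : ℝ, k < 1 ∧ ∀ v v' : EuclideanSpace ℝ (Fin C),
        ‖h v - h v'‖ ≤ k * ‖v - v'‖) ∧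
    ∃ qs : EuclideanSpace ℝ (Fin C),
      (∀ n, qs n = φ n (X.mulVec qs n + vhat n)) ∧
      (∀ q : EuclideanSpace ℝ (Fin C),
        (∀ n, q n = φ n (X.mulVec q n + vhat n)) → q = qs) ∧
      ∀ q0 : EuclideanSpace ℝ (Fin C),
        Filter.Tendsto (fun t => G^[t] q0) Filter.atTop (nhds qs) := by
  set k : ℝ := ‖X‖ * L with hkdef
  have hknn : 0 ≤ k := mul_nonneg (norm_nonneg _) hL
  have hsqrt2 : Real.sqrt 2 ≤ 2 := by
    nlinarith [Real.sq_sqrt (show (0:ℝ) ≤ 2 by norm_num), Real.sqrt_nonneg 2]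
  have hk1 : k < 1 := by linarith
  -- componentwise Lipschitz bound gives Euclidean norm bound
  have key : ∀ (u w : EuclideanSpace ℝ (Fin C)),
      (∀ n, |u n| ≤ L * |w n|) → ‖u‖ ≤ L * ‖w‖ := by
    intro u w hb
    rw [EuclideanSpace.norm_eq, EuclideanSpace.norm_eq,
      ← Real.sqrt_sq hL, ← Real.sqrt_mul (by positivity)]
    apply Real.sqrt_le_sqrt
    rw [Finset.mul_sum]
    apply Finset.sum_le_sum
    intro n _
    have h1 := hb n
    have h2 : |u n| ^ 2 ≤ (L * |w n|) ^ 2 := by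
      nlinarith [abs_nonneg (u n)]
    simpa [Real.norm_eq_abs, sq_abs, mul_pow] using h2
  -- contraction for h
  have hcon : ∀ v v' : EuclideanSpace ℝ (Fin C), ‖h v - h v'‖ ≤ k * ‖v - v'‖ := by
    intro v v'
    set d : EuclideanSpace ℝ (Fin C) :=
      (EuclideanSpace.equiv (Fin C) ℝ).symm (fun m => φ m (v m) - φ m (v' m)) with hd
    have hdiff : h v - h v' =
        (EuclideanSpace.equiv (Fin C) ℝ).symm (X.mulVec d) := by
      ext n
      have h1 : (h v - h v') n = h v n - h v' n := rfl
      rw [h1, hh, hh]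
      have h2 : (X.mulVec d : Fin C → ℝ)
          = X.mulVec ((fun m => φ m (v m)) - (fun m => φ m (v' m))) := rfl
      show _ = X.mulVec d n
      rw [h2, Matrix.mulVec_sub]
      simp [Pi.sub_apply]
    rw [hdiff]
    calc ‖(EuclideanSpace.equiv (Fin C) ℝ).symm (X.mulVec d)‖
        ≤ ‖X‖ * ‖d‖ := X.l2_opNorm_mulVec d
      _ ≤ ‖X‖ * (L * ‖v - v'‖) := by
          apply mul_le_mul_of_nonneg_left _ (norm_nonneg X)
          apply key
          intro n
          have h3 : (v - v') n = v n - v' n := rfl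
          rw [h3]
          exact hlip n (v n) (v' n)
      _ = k * ‖v - v'‖ := by rw [hkdef]; ring
  refine ⟨⟨k, hk1, hcon⟩, ?_⟩
  -- G is a contraction with the same constant
  have hGcon : ∀ q q' : EuclideanSpace ℝ (Fin C),
      dist (G q) (G q') ≤ k * dist q q' := by
    intro q q'
    rw [dist_eq_norm, dist_eq_norm]
    calc ‖G q - G q'‖
        ≤ L * ‖(EuclideanSpace.equiv (Fin C) ℝ).symm (X.mulVec (q - q'))‖ := by
          apply key
          intro n
          have h1 : (G q - G q') n = G q n - G q' n := rfl
          rw [h1, hG, hG]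
          have h2 : ((EuclideanSpace.equiv (Fin C) ℝ).symm (X.mulVec (q - q'))) n
              = X.mulVec (fun m => q m) n - X.mulVec (fun m => q' m) n := by
            show X.mulVec (q - q') n = _
            rw [Matrix.mulVec_sub]
            rfl
          rw [h2]
          have h3 : |φ n (X.mulVec (fun m => q m) n + vhat n)
              - φ n (X.mulVec (fun m => q' m) n + vhat n)|
              ≤ L * |(X.mulVec (fun m => q m) n + vhat n)
                - (X.mulVec (fun m => q' m) n + vhat n)| := hlip n _ _
          simpa [add_sub_add_right_eq_sub] using h3
      _ ≤ L * (‖X‖ * ‖q - q'‖) := by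
          apply mul_le_mul_of_nonneg_left _ hL
          exact X.l2_opNorm_mulVec _
      _ = k * ‖q - q'‖ := by rw [hkdef]; ring
  set K : NNReal := ⟨k, hknn⟩ with hKdef
  have hlipG : LipschitzWith K G := LipschitzWith.of_dist_le_mul (by exact hGcon)
  have hCW : ContractingWith K G := ⟨by exact_mod_cast hk1, hlipG⟩
  have : Nonempty (EuclideanSpace ℝ (Fin C)) := ⟨0⟩
  set qs := ContractingWith.fixedPoint G hCW with hqs
  have hfix : G qs = qs := hCW.fixedPoint_isFixedPt
  refine ⟨qs, ?_, ?_, ?_⟩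
  · intro n
    conv_lhs => rw [← hfix]
    rw [hG]
  · intro q hq
    have hqfix : G q = q := by
      ext n
      rw [hG, ← hq n]
    have hd := hGcon q qs
    rw [hqfix, hfix] at hd
    have hd0 : dist q qs = 0 := by
      nlinarith [dist_nonneg (x := q) (y := qs)]
    exact dist_eq_zero.mp hd0
  · intro q0
    exact hCW.tendsto_iterate_fixedPoint q0
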